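/- arXiv:1001.0149 — 2 statements merged into one kernel-verified Lean document; each statement's English description precedes it below -/
import Mathlib

section
/- For any two level-L boxes I, J of the 2D periodic hierarchical partition with I ∉ NL(J), there exists a unique level l with 3 ≤ l ≤ L and unique boxes I', J' at level l such that I ⊆ I', J ⊆ J', and I' ∈ IL(J'). -/
/-- Torus adjacency (or equality) of coordinates in `ZMod m`. -/
def nbr (m : ℕ) (a b : ZMod m) : Prop := a = b ∨ a = b + 1 ∨ a + 1 = b

/-- The neighbor-list relation `I ∈ NL(J)` for boxes of the level with `m × m` boxes of the
periodic unit square, boxes being indexed by pairs in `ZMod m × ZMod m`: the boxes coincide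
or are torus-adjacent. -/
def NLrel (m : ℕ) (I J : ZMod m × ZMod m) : Prop := nbr m I.1 J.1 ∧ nbr m I.2 J.2

/-- The parent, at level `l - 1`, of a box at level `l`. -/
def parentBox (l : ℕ) (I : ZMod (2 ^ l) × ZMod (2 ^ l)) :
    ZMod (2 ^ (l - 1)) × ZMod (2 ^ (l - 1)) :=
  (((I.1.val / 2 : ℕ) : ZMod (2 ^ (l - 1))), ((I.2.val / 2 : ℕ) : ZMod (2 ^ (l - 1))))

/-- The interaction-list relation `I ∈ IL(J)` at level `l`: at level `3` it consists of all
level-3 boxes not in `NL(J)`; at levels `l > 3` it consists of the boxes whose parent is in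
`NL(parent J)` but which are themselves not in `NL(J)`. -/
def ILrel (l : ℕ) (I J : ZMod (2 ^ l) × ZMod (2 ^ l)) : Prop :=
  ¬ NLrel (2 ^ l) I J ∧ (l = 3 ∨ NLrel (2 ^ (l - 1)) (parentBox l I) (parentBox l J))

/-- The ancestor, at level `l ≤ L`, of a level-`L` box. -/
def ancBox (L l : ℕ) (I : ZMod (2 ^ L) × ZMod (2 ^ L)) : ZMod (2 ^ l) × ZMod (2 ^ l) :=
  (((I.1.val / 2 ^ (L - l) : ℕ) : ZMod (2 ^ l)), ((I.2.val / 2 ^ (L - l) : ℕ) : ZMod (2 ^ l)))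

/-- Natural-number version of `nbr`. -/
def nbrN (m p q : ℕ) : Prop := p % m = q % m ∨ p % m = (q + 1) % m ∨ (p + 1) % m = q % m

lemma nbr_natCast (m p q : ℕ) : nbr m (p : ZMod m) (q : ZMod m) ↔ nbrN m p q := by
  unfold nbr nbrN
  rw [show ((q : ZMod m) + 1) = ((q + 1 : ℕ) : ZMod m) by push_cast; ring,
    show ((p : ZMod m) + 1) = ((p + 1 : ℕ) : ZMod m) by push_cast; ring,
    ZMod.natCast_eq_natCast_iff', ZMod.natCast_eq_natCast_iff', ZMod.natCast_eq_natCast_iff']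

lemma nbrN_div (m p q : ℕ) (hm : 0 < m) (hp : p < 2 * m) (hq : q < 2 * m)
    (h : nbrN (2 * m) p q) : nbrN m (p / 2) (q / 2) := by
  unfold nbrN at h ⊢
  rw [Nat.mod_eq_of_lt hp, Nat.mod_eq_of_lt hq] at h
  have hp2 : p / 2 < m := by omega
  have hq2 : q / 2 < m := by omega
  rw [Nat.mod_eq_of_lt hp2, Nat.mod_eq_of_lt hq2]
  rcases h with h | h | h
  · left; omega
  · rcases Nat.lt_or_ge (q + 1) (2 * m) with hlt | hge
    · rw [Nat.mod_eq_of_lt hlt] at h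
      by_cases he : p / 2 = q / 2
      · exact Or.inl he
      · right; left; rw [Nat.mod_eq_of_lt (show q / 2 + 1 < m by omega)]; omega
    · rw [show q + 1 = 2 * m by omega, Nat.mod_self] at h
      right; left
      rw [show q / 2 + 1 = m by omega, Nat.mod_self]; omega
  · rcases Nat.lt_or_ge (p + 1) (2 * m) with hlt | hge
    · rw [Nat.mod_eq_of_lt hlt] at h
      by_cases he : p / 2 = q / 2
      · exact Or.inl he
      · right; right; rw [Nat.mod_eq_of_lt (show p / 2 + 1 < m by omega)]; omega
    · rw [show p + 1 = 2 * m by omega, Nat.mod_self] at h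
      right; right
      rw [show p / 2 + 1 = m by omega, Nat.mod_self]; omega

/-- Nat version of `NLrel` of the level-`l` ancestors. -/
def NN (L l : ℕ) (I J : ZMod (2 ^ L) × ZMod (2 ^ L)) : Prop :=
  nbrN (2 ^ l) (I.1.val / 2 ^ (L - l)) (J.1.val / 2 ^ (L - l)) ∧
    nbrN (2 ^ l) (I.2.val / 2 ^ (L - l)) (J.2.val / 2 ^ (L - l))

lemma NL_iff (L l : ℕ) (I J : ZMod (2 ^ L) × ZMod (2 ^ L)) :
    NLrel (2 ^ l) (ancBox L l I) (ancBox L l J) ↔ NN L l I J := by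
  simp [NLrel, ancBox, NN, nbr_natCast]

lemma anc_div_lt (L l : ℕ) (h2 : l ≤ L) (a : ℕ) (ha : a < 2 ^ L) :
    a / 2 ^ (L - l) < 2 ^ l := by
  apply Nat.div_lt_of_lt_mul
  calc a < 2 ^ L := ha
    _ = 2 ^ (L - l) * 2 ^ l := by rw [← pow_add]; congr 1; omega

lemma anc_self (L : ℕ) (X : ZMod (2 ^ L) × ZMod (2 ^ L)) : ancBox L L X = X := by
  haveI : NeZero (2 ^ L) := ⟨(Nat.two_pow_pos L).ne'⟩
  unfold ancBox
  simp [Nat.sub_self, ZMod.natCast_val, ZMod.cast_id]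

lemma anc_parent (L l : ℕ) (h1 : 1 ≤ l) (h2 : l ≤ L) (X : ZMod (2 ^ L) × ZMod (2 ^ L)) :
    parentBox l (ancBox L l X) = ancBox L (l - 1) X := by
  haveI : NeZero (2 ^ L) := ⟨(Nat.two_pow_pos L).ne'⟩
  haveI : NeZero (2 ^ l) := ⟨(Nat.two_pow_pos l).ne'⟩
  unfold parentBox ancBox
  simp only [ZMod.val_natCast]
  rw [Nat.mod_eq_of_lt (anc_div_lt L l h2 _ (ZMod.val_lt _)),
    Nat.mod_eq_of_lt (anc_div_lt L l h2 _ (ZMod.val_lt _)),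
    Nat.div_div_eq_div_mul, Nat.div_div_eq_div_mul,
    show 2 ^ (L - l) * 2 = 2 ^ (L - (l - 1)) by rw [← pow_succ]; congr 1; omega]

lemma nbrN_anc_step (L l : ℕ) (h1 : 1 ≤ l) (h2 : l ≤ L) (a b : ℕ)
    (ha : a < 2 ^ L) (hb : b < 2 ^ L)
    (h : nbrN (2 ^ l) (a / 2 ^ (L - l)) (b / 2 ^ (L - l))) :
    nbrN (2 ^ (l - 1)) (a / 2 ^ (L - (l - 1))) (b / 2 ^ (L - (l - 1))) := by
  have h2l : (2 : ℕ) ^ l = 2 * 2 ^ (l - 1) := by rw [← pow_succ']; congr 1; omega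
  have key : ∀ x : ℕ, x / 2 ^ (L - l) / 2 = x / 2 ^ (L - (l - 1)) := by
    intro x
    rw [Nat.div_div_eq_div_mul,
      show 2 ^ (L - l) * 2 = 2 ^ (L - (l - 1)) by rw [← pow_succ]; congr 1; omega]
  rw [← key a, ← key b]
  rw [h2l] at h
  exact nbrN_div _ _ _ (Nat.two_pow_pos _)
    (by rw [← h2l]; exact anc_div_lt L l h2 a ha)
    (by rw [← h2l]; exact anc_div_lt L l h2 b hb) h

/-- For any two level-`L` boxes `I ∉ NL(J)` there is a unique level `l` with `3 ≤ l ≤ L`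
such that the (unique) ancestors `I' ⊇ I`, `J' ⊇ J` at level `l` satisfy `I' ∈ IL(J')`. -/
theorem stmt_10 (L : ℕ) (hL : 3 ≤ L) (I J : ZMod (2 ^ L) × ZMod (2 ^ L))
    (h : ¬ NLrel (2 ^ L) I J) :
    ∃! l : ℕ, (3 ≤ l ∧ l ≤ L) ∧ ILrel l (ancBox L l I) (ancBox L l J) := by
  classical
  haveI : NeZero (2 ^ L) := ⟨(Nat.two_pow_pos L).ne'⟩
  have hNL : ¬ NN L L I J := by
    rw [← NL_iff, anc_self, anc_self]; exact h
  have mono : ∀ l, 1 ≤ l → l ≤ L → NN L l I J → NN L (l - 1) I J := by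
    rintro l h1 h2 ⟨x, y⟩
    exact ⟨nbrN_anc_step L l h1 h2 _ _ (ZMod.val_lt _) (ZMod.val_lt _) x,
      nbrN_anc_step L l h1 h2 _ _ (ZMod.val_lt _) (ZMod.val_lt _) y⟩
  have hex : ∃ l, 3 ≤ l ∧ ¬ NN L l I J := ⟨L, hL, hNL⟩
  set l₀ := Nat.find hex with hl0
  obtain ⟨h3l₀, hNl₀⟩ := Nat.find_spec hex
  have hl₀L : l₀ ≤ L := Nat.find_min' hex ⟨hL, hNL⟩
  have up : ∀ l, l₀ ≤ l → l ≤ L → ¬ NN L l I J := by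
    intro l hl
    induction l, hl using Nat.le_induction with
    | base => exact fun _ => hNl₀
    | succ n hn ih =>
      intro hnL hNn
      exact ih (by omega) (mono (n + 1) (by omega) hnL hNn)
  have ILiff : ∀ l, 3 ≤ l → l ≤ L →
      (ILrel l (ancBox L l I) (ancBox L l J) ↔ (¬ NN L l I J ∧ (l = 3 ∨ NN L (l - 1) I J))) := by
    intro l h3 hlL
    unfold ILrel
    rw [NL_iff, anc_parent L l (by omega) hlL, anc_parent L l (by omega) hlL, NL_iff]
  refine ⟨l₀, ⟨⟨h3l₀, hl₀L⟩, ?_⟩, ?_⟩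
  · rw [ILiff l₀ h3l₀ hl₀L]
    refine ⟨hNl₀, ?_⟩
    by_cases h30 : l₀ = 3
    · exact Or.inl h30
    · right
      by_contra hc
      exact Nat.find_min hex (show l₀ - 1 < l₀ by omega) ⟨by omega, hc⟩
  · rintro l ⟨⟨h3, hlL⟩, hIL⟩
    rw [ILiff l h3 hlL] at hIL
    have hge : l₀ ≤ l := Nat.find_min' hex ⟨h3, hIL.1⟩
    rcases hIL.2 with h3' | hN
    · omega
    · by_contra hne
      exact up (l - 1) (by omega) (by omega) hN
end

section
/- If J and J' are two distinct boxes at level l ≥ 4 belonging to the same set S_{pq} (indices congruent mod 8), then NL(J) ∪ IL(J) and NL(J') ∪ IL(J') are disjoint. Consequently, for a matrix A whose block A(I,J) is nonzero only when I ∈ NL(J) ∪ IL(J), the products A·R_J for random matrices R_J supported on distinct boxes J ∈ S_{pq} have disjoint supports and can be recovered from a single application of A to the sum of the R_J. -/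
open Matrix
open scoped Classical

/-- The level-`l` box containing a grid point of the periodic `2^LM × 2^LM` grid. -/
def gridBox (LM l : ℕ) (p : ZMod (2 ^ LM) × ZMod (2 ^ LM)) :
    ZMod (2 ^ l) × ZMod (2 ^ l) :=
  (((p.1.val / 2 ^ (LM - l) : ℕ) : ZMod (2 ^ l)), ((p.2.val / 2 ^ (LM - l) : ℕ) : ZMod (2 ^ l)))

/-- Two elements of `ZMod n` are within torus distance `k`. -/
def close (k : ℕ) {n : ℕ} (x y : ZMod n) : Prop :=
  ∃ d ≤ k, x = y + (d : ZMod n) ∨ y = x + (d : ZMod n)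

lemma cast_eq_add (n : ℕ) [NeZero n] (x y : ZMod n) (d : ℕ)
    (h : x.val = y.val + d ∨ x.val + n = y.val + d) : x = y + (d : ZMod n) := by
  have hx : ((x.val : ℕ) : ZMod n) = x := ZMod.natCast_rightInverse x
  have hy : ((y.val : ℕ) : ZMod n) = y := ZMod.natCast_rightInverse y
  rcases h with h | h
  · rw [← hx, ← hy, h]; push_cast; ring
  · have : ((x.val + n : ℕ) : ZMod n) = ((y.val + d : ℕ) : ZMod n) := by rw [h]
    push_cast at this
    simpa [ZMod.natCast_self, hx, hy] using this

lemma close_mono {n k k'} {x y : ZMod n} (hk : k ≤ k') (h : close k x y) : close k' x y := by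
  obtain ⟨d, hd, h⟩ := h; exact ⟨d, hd.trans hk, h⟩

lemma nbr_close {n : ℕ} {x y : ZMod n} (h : nbr n x y) : close 1 x y := by
  rcases h with h | h | h
  · exact ⟨0, by omega, Or.inl (by simpa using h)⟩
  · exact ⟨1, le_refl 1, Or.inl (by simpa using h)⟩
  · exact ⟨1, le_refl 1, Or.inr (by simpa using h.symm)⟩

lemma cast_sub_eq {n : ℕ} {d1 d2 : ℕ} (hle : d1 ≤ d2) :
    ((d2 - d1 : ℕ) : ZMod n) = (d2 : ZMod n) - d1 := by push_cast [Nat.cast_sub hle]; ring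

lemma close_comb {n k1 k2 : ℕ} {x y y' : ZMod n} (h1 : close k1 x y) (h2 : close k2 x y') :
    close (k1 + k2) y y' := by
  obtain ⟨d1, hd1, h1⟩ := h1
  obtain ⟨d2, hd2, h2⟩ := h2
  rcases h1 with h1 | h1 <;> rcases h2 with h2 | h2
  · rcases le_total d1 d2 with hle | hle
    · exact ⟨d2 - d1, by omega, Or.inl (by rw [cast_sub_eq hle]; linear_combination h2 - h1)⟩
    · exact ⟨d1 - d2, by omega, Or.inr (by rw [cast_sub_eq hle]; linear_combination h1 - h2)⟩
  · exact ⟨d1 + d2, by omega, Or.inr (by push_cast; linear_combination h1 + h2)⟩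
  · exact ⟨d1 + d2, by omega, Or.inl (by push_cast; linear_combination h1 + h2)⟩
  · rcases le_total d1 d2 with hle | hle
    · exact ⟨d2 - d1, by omega, Or.inr (by rw [cast_sub_eq hle]; linear_combination h2 - h1)⟩
    · exact ⟨d1 - d2, by omega, Or.inl (by rw [cast_sub_eq hle]; linear_combination h1 - h2)⟩

lemma close_mod8 (l : ℕ) (hl : 4 ≤ l) (y y' : ZMod (2 ^ l)) (h : close 6 y y')
    (hm : y.val % 8 = y'.val % 8) : y = y' := by
  have hn : (16 : ℕ) ≤ 2 ^ l := by calc (16:ℕ) = 2 ^ 4 := by norm_num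
                                          _ ≤ 2 ^ l := Nat.pow_le_pow_right (by norm_num) hl
  have h8 : (8 : ℕ) ∣ 2 ^ l := by
    have : (2:ℕ) ^ 3 ∣ 2 ^ l := pow_dvd_pow 2 (by omega)
    simpa using this
  haveI : NeZero (2 ^ l) := ⟨by positivity⟩
  obtain ⟨d, hd, h⟩ := h
  have hdval : ((d : ZMod (2 ^ l))).val = d := ZMod.val_cast_of_lt (by omega)
  rcases h with h | h
  · have hv : y.val = (y'.val + d) % 2 ^ l := by
      rw [h, ZMod.val_add, hdval]
    have : (y'.val + d) % 2 ^ l % 8 = (y'.val + d) % 8 := Nat.mod_mod_of_dvd _ h8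
    have hd0 : d = 0 := by omega
    rw [h, hd0]; simp
  · have hv : y'.val = (y.val + d) % 2 ^ l := by
      rw [h, ZMod.val_add, hdval]
    have : (y.val + d) % 2 ^ l % 8 = (y.val + d) % 8 := Nat.mod_mod_of_dvd _ h8
    have hd0 : d = 0 := by omega
    rw [h, hd0]; simp

lemma parent_close (l : ℕ) (hl : 4 ≤ l) (x y : ZMod (2 ^ l))
    (h : nbr (2 ^ (l - 1)) ((x.val / 2 : ℕ) : ZMod (2 ^ (l - 1)))
      ((y.val / 2 : ℕ) : ZMod (2 ^ (l - 1)))) :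
    close 3 x y := by
  haveI : NeZero (2 ^ l) := ⟨by positivity⟩
  set m := 2 ^ (l - 1) with hm
  have hn2 : 2 ^ l = 2 * m := by
    rw [hm, ← pow_succ']
    congr 1
    omega
  have hmpos : 0 < m := by positivity
  set a := x.val with hadef
  set b := y.val with hbdef
  have ha : a < 2 * m := by rw [← hn2]; exact ZMod.val_lt x
  have hb : b < 2 * m := by rw [← hn2]; exact ZMod.val_lt y
  have hab2 : a / 2 < m := by omega
  have hbb2 : b / 2 < m := by omega
  have key : ∃ d ≤ 3, (a = b + d ∨ a + 2 * m = b + d ∨ b = a + d ∨ b + 2 * m = a + d) := by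
    rcases h with h | h | h
    · have := (ZMod.natCast_eq_natCast_iff _ _ _).mp h
      have h1 : a / 2 % m = b / 2 % m := this
      rw [Nat.mod_eq_of_lt hab2, Nat.mod_eq_of_lt hbb2] at h1
      rcases le_total a b with hle | hle
      · exact ⟨b - a, by omega, by omega⟩
      · exact ⟨a - b, by omega, by omega⟩
    · have h' : ((a / 2 : ℕ) : ZMod m) = ((b / 2 + 1 : ℕ) : ZMod m) := by push_cast; exact h
      have h1 : a / 2 % m = (b / 2 + 1) % m := (ZMod.natCast_eq_natCast_iff _ _ _).mp h'
      rw [Nat.mod_eq_of_lt hab2] at h1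
      rcases Nat.lt_or_ge (b / 2 + 1) m with h2 | h2
      · rw [Nat.mod_eq_of_lt h2] at h1
        exact ⟨a - b, by omega, by omega⟩
      · have h3 : b / 2 + 1 = m := by omega
        rw [h3, Nat.mod_self] at h1
        exact ⟨a + 2 * m - b, by omega, by omega⟩
    · have h' : ((a / 2 + 1 : ℕ) : ZMod m) = ((b / 2 : ℕ) : ZMod m) := by push_cast; exact h
      have h1 : (a / 2 + 1) % m = b / 2 % m := (ZMod.natCast_eq_natCast_iff _ _ _).mp h'
      rw [Nat.mod_eq_of_lt hbb2] at h1
      rcases Nat.lt_or_ge (a / 2 + 1) m with h2 | h2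
      · rw [Nat.mod_eq_of_lt h2] at h1
        exact ⟨b - a, by omega, by omega⟩
      · have h3 : a / 2 + 1 = m := by omega
        rw [h3, Nat.mod_self] at h1
        exact ⟨b + 2 * m - a, by omega, by omega⟩
  obtain ⟨d, hd, hcase⟩ := key
  rcases hcase with hc | hc | hc | hc
  · exact ⟨d, hd, Or.inl (cast_eq_add _ x y d (Or.inl hc))⟩
  · exact ⟨d, hd, Or.inl (cast_eq_add _ x y d (Or.inr (by omega)))⟩
  · exact ⟨d, hd, Or.inr (cast_eq_add _ y x d (Or.inl hc))⟩
  · exact ⟨d, hd, Or.inr (cast_eq_add _ y x d (Or.inr (by omega)))⟩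

lemma rel_close (l : ℕ) (hl : 4 ≤ l) (I J : ZMod (2 ^ l) × ZMod (2 ^ l))
    (h : NLrel (2 ^ l) I J ∨ ILrel l I J) : close 3 I.1 J.1 ∧ close 3 I.2 J.2 := by
  rcases h with ⟨h1, h2⟩ | ⟨_, h⟩
  · exact ⟨close_mono (by omega) (nbr_close h1), close_mono (by omega) (nbr_close h2)⟩
  · rcases h with h3 | ⟨h1, h2⟩
    · omega
    · exact ⟨parent_close l hl I.1 J.1 h1, parent_close l hl I.2 J.2 h2⟩

lemma main_disj (l : ℕ) (hl : 4 ≤ l) (J J' : ZMod (2 ^ l) × ZMod (2 ^ l)) (hne : J ≠ J')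
    (hmod1 : J.1.val % 8 = J'.1.val % 8) (hmod2 : J.2.val % 8 = J'.2.val % 8)
    (I : ZMod (2 ^ l) × ZMod (2 ^ l)) :
    ¬((NLrel (2 ^ l) I J ∨ ILrel l I J) ∧ (NLrel (2 ^ l) I J' ∨ ILrel l I J')) := by
  rintro ⟨h1, h2⟩
  obtain ⟨c1, c2⟩ := rel_close l hl I J h1
  obtain ⟨c1', c2'⟩ := rel_close l hl I J' h2
  have e1 : J.1 = J'.1 := close_mod8 l hl _ _ (close_comb c1 c1') hmod1
  have e2 : J.2 = J'.2 := close_mod8 l hl _ _ (close_comb c2 c2') hmod2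
  exact hne (Prod.ext e1 e2)

/-- If `J ≠ J'` are level-`l` boxes (`l ≥ 4`) with coordinates congruent modulo `8`
(members of the same class `S_{pq}`), then `NL(J) ∪ IL(J)` and `NL(J') ∪ IL(J')` are
disjoint.  Consequently, for a matrix `A` on the grid whose block `A(I, J)` is nonzero
only when `I ∈ NL(J) ∪ IL(J)`, and for test matrices `R_B` supported on the grid points of
boxes `B` from one class `S_{pq}`, the product `A · R_J` can be read off from the single
application of `A` to `∑_B R_B`, on all rows belonging to boxes in `NL(J) ∪ IL(J)`. -/
theorem stmt_12 (LM l : ℕ) (hl : 4 ≤ l) (hlLM : l ≤ LM)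
    (J J' : ZMod (2 ^ l) × ZMod (2 ^ l)) (hne : J ≠ J')
    (hmod1 : J.1.val % 8 = J'.1.val % 8) (hmod2 : J.2.val % 8 = J'.2.val % 8) :
    (∀ I : ZMod (2 ^ l) × ZMod (2 ^ l),
        ¬((NLrel (2 ^ l) I J ∨ ILrel l I J) ∧ (NLrel (2 ^ l) I J' ∨ ILrel l I J'))) ∧
    ∀ (κ : Type) [Fintype κ]
      (A : Matrix (ZMod (2 ^ LM) × ZMod (2 ^ LM)) (ZMod (2 ^ LM) × ZMod (2 ^ LM)) ℝ),
      (∀ p q, ¬(NLrel (2 ^ l) (gridBox LM l p) (gridBox LM l q) ∨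
          ILrel l (gridBox LM l p) (gridBox LM l q)) → A p q = 0) →
      ∀ (R : (ZMod (2 ^ l) × ZMod (2 ^ l)) → Matrix (ZMod (2 ^ LM) × ZMod (2 ^ LM)) κ ℝ),
      (∀ B p k, gridBox LM l p ≠ B → R B p k = 0) →
      ∀ (S : Finset (ZMod (2 ^ l) × ZMod (2 ^ l))),
      (∀ B ∈ S, B.1.val % 8 = J.1.val % 8 ∧ B.2.val % 8 = J.2.val % 8) →
      J ∈ S →
      ∀ (p : ZMod (2 ^ LM) × ZMod (2 ^ LM)),
        (NLrel (2 ^ l) (gridBox LM l p) J ∨ ILrel l (gridBox LM l p) J) →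
        ∀ k : κ, (A * ∑ B ∈ S, R B) p k = (A * R J) p k := by
  refine ⟨main_disj l hl J J' hne hmod1 hmod2, ?_⟩
  intro κ _ A hA R hR S hS hJS p hp k
  rw [Matrix.mul_sum, Matrix.sum_apply]
  refine Finset.sum_eq_single_of_mem J hJS (fun B hB hBJ => ?_)
  rw [Matrix.mul_apply]
  apply Finset.sum_eq_zero
  intro q _
  by_cases hq : gridBox LM l q = B
  · have hAz : A p q = 0 := by
      apply hA p q
      intro hcon
      rw [hq] at hcon
      exact main_disj l hl J B (Ne.symm hBJ) (hS B hB).1.symm (hS B hB).2.symm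
        (gridBox LM l p) ⟨hp, hcon⟩
    rw [hAz, zero_mul]
  · rw [hR B q k hq, mul_zero]
end
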